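/- Assume: T > 0; d1, d2, r1, r2, a1, a2, b1, b2 : ℝ → ℝ are continuous, positive, T-periodic; the kernels J1, J2 are nonnegative, Lebesgue measurable, satisfy ∫_ℝ Ji(x) dx = 1 and ∫_ℝ Ji(x)e^{−λx} dx < ∞ for every λ ∈ ℝ. Let (φ⁻, ψ⁻) and (φ⁺, ψ⁺) be, respectively, a bounded lower solution and a bounded upper solution of the cooperative Cauchy system on ℝ × [0, ∞), taking values in [0,1] × [0,1], and let (φ, ψ) be a bounded solution (satisfying the system with equality) with initial data (φ0, ψ0). If φ⁻(x,0) ≤ φ0(x) ≤ φ⁺(x,0) and ψ⁻(x,0) ≤ ψ0(x) ≤ ψ⁺(x,0) for all x ∈ ℝ, then φ⁻(x,t) ≤ φ(x,t) ≤ φ⁺(x,t) and ψ⁻(x,t) ≤ ψ(x,t) ≤ ψ⁺(x,t) for all (x,t) ∈ ℝ × [0, ∞). -/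

import Mathlib

open MeasureTheory Set Filter

noncomputable def p0c (r a : ℝ → ℝ) (T : ℝ) : ℝ :=
  (Real.exp (∫ s in (0:ℝ)..T, r s) - 1) /
    ∫ s in (0:ℝ)..T, Real.exp (∫ τ in (0:ℝ)..s, r τ) * a s

noncomputable def pfun (r a : ℝ → ℝ) (T t : ℝ) : ℝ :=
  p0c r a T * Real.exp (∫ s in (0:ℝ)..t, r s) /
    (1 + p0c r a T * ∫ s in (0:ℝ)..t, Real.exp (∫ τ in (0:ℝ)..s, r τ) * a s)

/-- A solution of the cooperative Cauchy system on ℝ × (0, ∞). -/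
def IsCauchySolution (d1 d2 J1 J2 a1 b1 a2 b2 p q : ℝ → ℝ) (φ ψ : ℝ → ℝ → ℝ) : Prop :=
  Continuous (fun xt : ℝ × ℝ => φ xt.1 xt.2) ∧
  Continuous (fun xt : ℝ × ℝ => ψ xt.1 xt.2) ∧
  ∀ x t : ℝ, 0 < t →
    HasDerivAt (fun s => φ x s)
      (d1 t * ((∫ y, J1 y * φ (x - y) t) - φ x t) +
        φ x t * (a1 t * p t * (1 - φ x t) - b1 t * q t * (1 - ψ x t))) t ∧
    HasDerivAt (fun s => ψ x s)
      (d2 t * ((∫ y, J2 y * ψ (x - y) t) - ψ x t) +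
        (1 - ψ x t) * (a2 t * p t * φ x t - b2 t * q t * ψ x t)) t

/-- An upper solution of the cooperative Cauchy system on ℝ × (0, ∞). -/
def IsCauchyUpper (d1 d2 J1 J2 a1 b1 a2 b2 p q : ℝ → ℝ) (φ ψ : ℝ → ℝ → ℝ) : Prop :=
  Continuous (fun xt : ℝ × ℝ => φ xt.1 xt.2) ∧
  Continuous (fun xt : ℝ × ℝ => ψ xt.1 xt.2) ∧
  ∀ x t : ℝ, 0 < t →
    ∃ φt ψt : ℝ,
      HasDerivAt (fun s => φ x s) φt t ∧ HasDerivAt (fun s => ψ x s) ψt t ∧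
      d1 t * ((∫ y, J1 y * φ (x - y) t) - φ x t) +
        φ x t * (a1 t * p t * (1 - φ x t) - b1 t * q t * (1 - ψ x t)) ≤ φt ∧
      d2 t * ((∫ y, J2 y * ψ (x - y) t) - ψ x t) +
        (1 - ψ x t) * (a2 t * p t * φ x t - b2 t * q t * ψ x t) ≤ ψt

/-- A lower solution of the cooperative Cauchy system on ℝ × (0, ∞). -/
def IsCauchyLower (d1 d2 J1 J2 a1 b1 a2 b2 p q : ℝ → ℝ) (φ ψ : ℝ → ℝ → ℝ) : Prop :=
  Continuous (fun xt : ℝ × ℝ => φ xt.1 xt.2) ∧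
  Continuous (fun xt : ℝ × ℝ => ψ xt.1 xt.2) ∧
  ∀ x t : ℝ, 0 < t →
    ∃ φt ψt : ℝ,
      HasDerivAt (fun s => φ x s) φt t ∧ HasDerivAt (fun s => ψ x s) ψt t ∧
      φt ≤ d1 t * ((∫ y, J1 y * φ (x - y) t) - φ x t) +
        φ x t * (a1 t * p t * (1 - φ x t) - b1 t * q t * (1 - ψ x t)) ∧
      ψt ≤ d2 t * ((∫ y, J2 y * ψ (x - y) t) - ψ x t) +
        (1 - ψ x t) * (a2 t * p t * φ x t - b2 t * q t * ψ x t)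




section Helpers

lemma ftc_cont {A : ℝ → ℝ} (hA : Continuous A) (t : ℝ) :
    HasDerivAt (fun u => ∫ s in (0:ℝ)..u, A s) (A t) t :=
  intervalIntegral.integral_hasDerivAt_right (hA.intervalIntegrable 0 t)
    (hA.stronglyMeasurable.stronglyMeasurableAtFilter) hA.continuousAt

lemma ode_lb {t0 L : ℝ} (ht0 : 0 < t0) {A w g : ℝ → ℝ}
    (hA : Continuous A) (hAb : ∀ t ∈ Icc (0:ℝ) t0, |A t| ≤ L)
    (hw : Continuous w) (hw0 : 0 ≤ w 0)
    (hg : Continuous g) (hg0 : ∀ t, 0 ≤ g t)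
    (hderiv : ∀ t ∈ Ioo (0:ℝ) t0, ∃ w', HasDerivAt w w' t ∧ A t * w t - g t ≤ w') :
    ∀ t ∈ Icc (0:ℝ) t0, -(Real.exp (2*L*t0) * ∫ s in (0:ℝ)..t, g s) ≤ w t := by
  have hL : 0 ≤ L := le_trans (abs_nonneg _) (hAb 0 ⟨le_refl _, ht0.le⟩)
  set I : ℝ → ℝ := fun u => ∫ s in (0:ℝ)..u, A s with hI
  have hIc : Continuous I := intervalIntegral.continuous_primitive
    (fun a b => hA.intervalIntegrable a b) 0
  set E : ℝ → ℝ := fun u => Real.exp (-I u) with hEdef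
  have hEc : Continuous E := Real.continuous_exp.comp hIc.neg
  have hEpos : ∀ u, 0 < E u := fun u => Real.exp_pos _
  have hEd : ∀ u, HasDerivAt E (E u * (-A u)) u := fun u => ((ftc_cont hA u).neg).exp
  set G2 : ℝ → ℝ := fun u => ∫ s in (0:ℝ)..u, E s * g s with hG2def
  have hEgc : Continuous fun s => E s * g s := hEc.mul hg
  have hG2c : Continuous G2 := intervalIntegral.continuous_primitive
    (fun a b => hEgc.intervalIntegrable a b) 0
  have hG2d : ∀ u, HasDerivAt G2 (E u * g u) u := fun u => ftc_cont hEgc u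
  set F : ℝ → ℝ := fun u => E u * w u + G2 u with hFdef
  have hFc : Continuous F := (hEc.mul hw).add hG2c
  have hFd : ∀ u ∈ Ioo (0:ℝ) t0, ∃ D, HasDerivAt F D u ∧ 0 ≤ D := by
    intro u hu
    obtain ⟨w', hw', hge⟩ := hderiv u hu
    refine ⟨E u * (-A u) * w u + E u * w' + E u * g u,
      (((hEd u).mul hw').add (hG2d u)), ?_⟩
    have : E u * (-A u) * w u + E u * w' + E u * g u
        = E u * (w' - (A u * w u - g u)) := by ring
    rw [this]
    exact mul_nonneg (hEpos u).le (by linarith)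
  have hmono : MonotoneOn F (Icc (0:ℝ) t0) := by
    apply monotoneOn_of_deriv_nonneg (convex_Icc _ _) hFc.continuousOn
    · intro u hu
      rw [interior_Icc] at hu
      exact ((hFd u hu).choose_spec.1).differentiableAt.differentiableWithinAt
    · intro u hu
      rw [interior_Icc] at hu
      obtain ⟨D, hD, hD0⟩ := hFd u hu
      rw [hD.deriv]; exact hD0
  intro t ht
  have hF0 : F 0 = w 0 := by
    simp [hFdef, hG2def, hEdef, hI, intervalIntegral.integral_same]
  have hFt : w 0 ≤ F t := hF0 ▸ hmono ⟨le_refl _, ht0.le⟩ ht ht.1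
  have hIb : ∀ s ∈ Icc (0:ℝ) t0, |I s| ≤ L * t0 := by
    intro s hs
    have h1 : |I s| ≤ L * |s - 0| := by
      rw [← Real.norm_eq_abs]
      apply intervalIntegral.norm_integral_le_of_norm_le_const
      simp only [Real.norm_eq_abs]
      intro y hy
      rw [uIoc_of_le hs.1] at hy
      exact hAb y ⟨hy.1.le, hy.2.trans hs.2⟩
    have : L * |s - 0| ≤ L * t0 := by
      rw [sub_zero, abs_of_nonneg hs.1]
      exact mul_le_mul_of_nonneg_left hs.2 hL
    linarith
  have hEub : ∀ s ∈ Icc (0:ℝ) t0, E s ≤ Real.exp (L * t0) := by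
    intro s hs
    exact Real.exp_le_exp.mpr (by have := hIb s hs; rw [abs_le] at this; linarith)
  have hElb : Real.exp (-(L * t0)) ≤ E t := by
    apply Real.exp_le_exp.mpr
    have := hIb t ht; rw [abs_le] at this; linarith
  set S : ℝ := ∫ s in (0:ℝ)..t, g s with hS
  have hS0 : 0 ≤ S := intervalIntegral.integral_nonneg ht.1 (fun s _ => hg0 s)
  have hG2b : G2 t ≤ Real.exp (L * t0) * S := by
    have : G2 t ≤ ∫ s in (0:ℝ)..t, Real.exp (L * t0) * g s := by
      apply intervalIntegral.integral_mono_on ht.1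
        (hEgc.intervalIntegrable 0 t)
        ((continuous_const.mul hg).intervalIntegrable 0 t)
      intro s hs
      exact mul_le_mul_of_nonneg_right
        (hEub s ⟨hs.1, hs.2.trans ht.2⟩) (hg0 s)
    rwa [intervalIntegral.integral_const_mul] at this
  have key : -G2 t ≤ E t * w t := by
    have : 0 ≤ F t := le_trans hw0 hFt
    simp only [hFdef] at this; linarith
  have hmul : E t * (-(Real.exp (2*L*t0) * S)) ≤ E t * w t := by
    have h2 : Real.exp (L*t0) * S ≤ E t * (Real.exp (2*L*t0) * S) := by
      have h3 : Real.exp (-(L*t0)) * (Real.exp (2*L*t0) * S)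
          ≤ E t * (Real.exp (2*L*t0) * S) :=
        mul_le_mul_of_nonneg_right hElb (mul_nonneg (Real.exp_pos _).le hS0)
      have h4 : Real.exp (-(L*t0)) * Real.exp (2*L*t0) = Real.exp (L*t0) := by
        rw [← Real.exp_add]; ring_nf
      nlinarith [h3, h4]
    have : -(E t * (Real.exp (2*L*t0)*S)) ≤ -( Real.exp (L*t0) * S) := by linarith
    calc E t * (-(Real.exp (2*L*t0) * S)) = -(E t * (Real.exp (2*L*t0)*S)) := by ring
      _ ≤ -(Real.exp (L*t0) * S) := this
      _ ≤ -G2 t := by linarith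
      _ ≤ E t * w t := key
  exact le_of_mul_le_mul_left hmul (hEpos t)

lemma prod_lb {a b B c : ℝ} (ha : -c ≤ a) (hb : -c ≤ b) (ha' : a ≤ B) (hb' : b ≤ B)
    (hc : 0 ≤ c) (hB : 0 ≤ B) : -(B*c) ≤ a*b := by
  rcases le_or_gt 0 a with h|h
  · rcases le_or_gt 0 b with h2|h2
    · nlinarith
    · nlinarith [mul_nonneg h (by linarith : (0:ℝ) ≤ b + c),
        mul_nonneg (by linarith : (0:ℝ) ≤ B - a) hc]
  · nlinarith [mul_nonneg hB (by linarith : (0:ℝ) ≤ a + c),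
      mul_nonneg (by linarith : (0:ℝ) ≤ B - b) (by linarith : (0:ℝ) ≤ -a)]

lemma mul_lb {c C z m : ℝ} (h0 : 0 ≤ c) (h1 : c ≤ C) (h2 : -m ≤ z) (h3 : 0 ≤ m) :
    -(C*m) ≤ c*z := by
  rcases le_or_gt 0 z with h|h
  · nlinarith
  · nlinarith [mul_nonneg (by linarith : (0:ℝ) ≤ C - c) (by linarith : (0:ℝ) ≤ -z),
      mul_nonneg (by linarith : (0:ℝ) ≤ C) (by linarith : (0:ℝ) ≤ z + m)]

lemma abs3 {a b z R m : ℝ} (ha : |a| ≤ R) (hb : |b| ≤ R) (hz : |z| ≤ m) :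
    |a*b*z| ≤ R*R*m := by
  have h0R : 0 ≤ R := (abs_nonneg a).trans ha
  rw [abs_mul, abs_mul]
  exact mul_le_mul (mul_le_mul ha hb (abs_nonneg b) h0R) hz (abs_nonneg z)
    (mul_nonneg h0R h0R)

lemma conv_int {J : ℝ → ℝ} (hJint : Integrable J) {u : ℝ → ℝ} (hu : Continuous u)
    {B : ℝ} (hub : ∀ z, |u z| ≤ B) (x : ℝ) :
    Integrable (fun y => J y * u (x - y)) := by
  have hcont : Continuous fun y => u (x - y) :=
    hu.comp (continuous_const.sub continuous_id)
  have h := hJint.bdd_mul (f := fun y => u (x - y)) (c := B)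
    hcont.aestronglyMeasurable
    (Filter.Eventually.of_forall fun y => by rw [Real.norm_eq_abs]; exact hub _)
  have heq : (fun y => u (x - y) * J y) = fun y => J y * u (x - y) := by
    funext y; ring
  rwa [heq] at h

lemma conv_diff_lb {J : ℝ → ℝ} (hJint : Integrable J) (hJ0 : ∀ y, 0 ≤ J y)
    (hJ1 : (∫ y, J y) = 1) {f g : ℝ → ℝ} (hf : Continuous f) (hg : Continuous g)
    {B c : ℝ} (hfb : ∀ z, |f z| ≤ B) (hgb : ∀ z, |g z| ≤ B) (hc : 0 ≤ c)
    (hlb : ∀ z, -c ≤ f z - g z) (x : ℝ) :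
    -c ≤ (∫ y, J y * f (x - y)) - ∫ y, J y * g (x - y) := by
  have hif : Integrable fun y => J y * f (x-y) := conv_int hJint hf hfb x
  have hig : Integrable fun y => J y * g (x-y) := conv_int hJint hg hgb x
  have heq2 : (fun y => J y * f (x-y) - J y * g (x-y))
      = fun y => J y * (f (x-y) - g (x-y)) := by funext y; ring
  have heq : (∫ y, J y * f (x-y)) - (∫ y, J y * g (x-y))
      = ∫ y, J y * (f (x-y) - g (x-y)) := by
    rw [← integral_sub hif hig, heq2]
  rw [heq]
  have hintd : Integrable fun y => J y * (f (x-y) - g (x-y)) := heq2 ▸ (hif.sub hig)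
  have h1 : ∫ y, J y * (-c) ≤ ∫ y, J y * (f (x-y) - g (x-y)) := by
    apply integral_mono (hJint.mul_const _) hintd
    intro y
    exact mul_le_mul_of_nonneg_left (hlb _) (hJ0 y)
  rw [integral_mul_const, hJ1] at h1
  linarith

end Helpers

section PfunFacts

lemma p0c_nonneg (r a : ℝ → ℝ) (T : ℝ) (hT : 0 ≤ T) (hr : ∀ s, 0 ≤ r s)
    (ha : ∀ s, 0 ≤ a s) : 0 ≤ p0c r a T := by
  apply div_nonneg
  · have h1 : (0:ℝ) ≤ ∫ s in (0:ℝ)..T, r s :=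
      intervalIntegral.integral_nonneg hT (fun s _ => hr s)
    have := Real.one_le_exp h1
    linarith
  · exact intervalIntegral.integral_nonneg hT
      (fun s _ => mul_nonneg (Real.exp_pos _).le (ha s))

lemma pfun_nonneg (r a : ℝ → ℝ) (T : ℝ) (hT : 0 ≤ T) (hr : ∀ s, 0 ≤ r s) (ha : ∀ s, 0 ≤ a s)
    {t : ℝ} (ht : 0 ≤ t) : 0 ≤ pfun r a T t := by
  have hc := p0c_nonneg r a T hT hr ha
  have hJ : (0:ℝ) ≤ ∫ s in (0:ℝ)..t, Real.exp (∫ τ in (0:ℝ)..s, r τ) * a s :=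
    intervalIntegral.integral_nonneg ht
      (fun s _ => mul_nonneg (Real.exp_pos _).le (ha s))
  unfold pfun
  apply div_nonneg (mul_nonneg hc (Real.exp_pos _).le)
  nlinarith

lemma pfun_contOn (r a : ℝ → ℝ) (T : ℝ) (hT : 0 ≤ T) (hr : Continuous r) (hrp : ∀ s, 0 ≤ r s)
    (ha : Continuous a) (hap : ∀ s, 0 ≤ a s) :
    ContinuousOn (pfun r a T) (Ici (0:ℝ)) := by
  have hI : Continuous fun t => ∫ s in (0:ℝ)..t, r s :=
    intervalIntegral.continuous_primitive (fun c b => hr.intervalIntegrable c b) 0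
  have hint : Continuous fun s => Real.exp (∫ τ in (0:ℝ)..s, r τ) * a s :=
    (Real.continuous_exp.comp hI).mul ha
  have hJ : Continuous fun t => ∫ s in (0:ℝ)..t, Real.exp (∫ τ in (0:ℝ)..s, r τ) * a s :=
    intervalIntegral.continuous_primitive (fun c b => hint.intervalIntegrable c b) 0
  have hc := p0c_nonneg r a T hT hrp hap
  apply ContinuousOn.div
  · exact (continuous_const.mul (Real.continuous_exp.comp hI)).continuousOn
  · exact (continuous_const.add (continuous_const.mul hJ)).continuousOn
  · intro t ht
    have hJt : (0:ℝ) ≤ ∫ s in (0:ℝ)..t, Real.exp (∫ τ in (0:ℝ)..s, r τ) * a s :=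
      intervalIntegral.integral_nonneg ht
        (fun s _ => mul_nonneg (Real.exp_pos _).le (hap s))
    have : (0:ℝ) < 1 + p0c r a T * ∫ s in (0:ℝ)..t, Real.exp (∫ τ in (0:ℝ)..s, r τ) * a s := by
      nlinarith
    exact this.ne'

noncomputable def pglob (r a : ℝ → ℝ) (T s : ℝ) : ℝ := pfun r a T (max s 0)

lemma pglob_eq (r a : ℝ → ℝ) (T : ℝ) {s : ℝ} (hs : 0 ≤ s) :
    pglob r a T s = pfun r a T s := by rw [pglob, max_eq_left hs]

lemma pglob_cont (r a : ℝ → ℝ) (T : ℝ) (hT : 0 ≤ T) (hr : Continuous r) (hrp : ∀ s, 0 ≤ r s)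
    (ha : Continuous a) (hap : ∀ s, 0 ≤ a s) :
    Continuous (pglob r a T) :=
  (pfun_contOn r a T hT hr hrp ha hap).comp_continuous
    (continuous_id.max continuous_const) (fun x => le_max_right x 0)

end PfunFacts

set_option maxHeartbeats 2000000 in
theorem stmt6 (T : ℝ) (hT : 0 < T)
    (d1 d2 r1 r2 a1 a2 b1 b2 J1 J2 : ℝ → ℝ)
    (hd1 : Continuous d1 ∧ (∀ t, 0 < d1 t) ∧ ∀ t, d1 (t + T) = d1 t)
    (hd2 : Continuous d2 ∧ (∀ t, 0 < d2 t) ∧ ∀ t, d2 (t + T) = d2 t)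
    (hr1 : Continuous r1 ∧ (∀ t, 0 < r1 t) ∧ ∀ t, r1 (t + T) = r1 t)
    (hr2 : Continuous r2 ∧ (∀ t, 0 < r2 t) ∧ ∀ t, r2 (t + T) = r2 t)
    (ha1 : Continuous a1 ∧ (∀ t, 0 < a1 t) ∧ ∀ t, a1 (t + T) = a1 t)
    (ha2 : Continuous a2 ∧ (∀ t, 0 < a2 t) ∧ ∀ t, a2 (t + T) = a2 t)
    (hb1 : Continuous b1 ∧ (∀ t, 0 < b1 t) ∧ ∀ t, b1 (t + T) = b1 t)
    (hb2 : Continuous b2 ∧ (∀ t, 0 < b2 t) ∧ ∀ t, b2 (t + T) = b2 t)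
    (hJ1 : Measurable J1 ∧ (∀ x, 0 ≤ J1 x) ∧ (∫ x, J1 x) = 1 ∧
      ∀ l : ℝ, Integrable fun x => J1 x * Real.exp (-l * x))
    (hJ2 : Measurable J2 ∧ (∀ x, 0 ≤ J2 x) ∧ (∫ x, J2 x) = 1 ∧
      ∀ l : ℝ, Integrable fun x => J2 x * Real.exp (-l * x))
    (φm ψm φp ψp φ ψ : ℝ → ℝ → ℝ) (φ0 ψ0 : ℝ → ℝ)
    (hlow : IsCauchyLower d1 d2 J1 J2 a1 b1 a2 b2
      (fun t => pfun r1 a1 T t) (fun t => pfun r2 b2 T t) φm ψm)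
    (hup : IsCauchyUpper d1 d2 J1 J2 a1 b1 a2 b2
      (fun t => pfun r1 a1 T t) (fun t => pfun r2 b2 T t) φp ψp)
    (hsol : IsCauchySolution d1 d2 J1 J2 a1 b1 a2 b2
      (fun t => pfun r1 a1 T t) (fun t => pfun r2 b2 T t) φ ψ)
    (hm01 : ∀ x t, φm x t ∈ Set.Icc (0:ℝ) 1 ∧ ψm x t ∈ Set.Icc (0:ℝ) 1)
    (hp01 : ∀ x t, φp x t ∈ Set.Icc (0:ℝ) 1 ∧ ψp x t ∈ Set.Icc (0:ℝ) 1)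
    (hbdd : ∃ M : ℝ, ∀ x t, |φ x t| ≤ M ∧ |ψ x t| ≤ M)
    (hinitdata : ∀ x : ℝ, φ x 0 = φ0 x ∧ ψ x 0 = ψ0 x)
    (hinit : ∀ x : ℝ, φm x 0 ≤ φ0 x ∧ φ0 x ≤ φp x 0 ∧ ψm x 0 ≤ ψ0 x ∧ ψ0 x ≤ ψp x 0) :
    ∀ x t : ℝ, 0 ≤ t →
      φm x t ≤ φ x t ∧ φ x t ≤ φp x t ∧ ψm x t ≤ ψ x t ∧ ψ x t ≤ ψp x t := by
  -- basic facts
  have hT0 : (0:ℝ) ≤ T := hT.le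
  have hr1nn : ∀ s, 0 ≤ r1 s := fun s => (hr1.2.1 s).le
  have ha1nn : ∀ s, 0 ≤ a1 s := fun s => (ha1.2.1 s).le
  have hr2nn : ∀ s, 0 ≤ r2 s := fun s => (hr2.2.1 s).le
  have hb2nn : ∀ s, 0 ≤ b2 s := fun s => (hb2.2.1 s).le
  have hpgc : Continuous (pglob r1 a1 T) := pglob_cont r1 a1 T hT0 hr1.1 hr1nn ha1.1 ha1nn
  have hqgc : Continuous (pglob r2 b2 T) := pglob_cont r2 b2 T hT0 hr2.1 hr2nn hb2.1 hb2nn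
  have hpnn : ∀ s : ℝ, 0 ≤ s → 0 ≤ pfun r1 a1 T s :=
    fun s hs => pfun_nonneg r1 a1 T hT0 hr1nn ha1nn hs
  have hqnn : ∀ s : ℝ, 0 ≤ s → 0 ≤ pfun r2 b2 T s :=
    fun s hs => pfun_nonneg r2 b2 T hT0 hr2nn hb2nn hs
  obtain ⟨M0, hM0⟩ := hbdd
  have hM0nn : 0 ≤ M0 := (abs_nonneg _).trans (hM0 0 0).1
  have hφle : ∀ y s, -M0 ≤ φ y s ∧ φ y s ≤ M0 := fun y s => abs_le.mp (hM0 y s).1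
  have hψle : ∀ y s, -M0 ≤ ψ y s ∧ ψ y s ≤ M0 := fun y s => abs_le.mp (hM0 y s).2
  have hJ1int : Integrable J1 := by simpa using hJ1.2.2.2 0
  have hJ2int : Integrable J2 := by simpa using hJ2.2.2.2 0
  -- continuity sections
  have cφ : ∀ x, Continuous fun s => φ x s :=
    fun x => hsol.1.comp (continuous_const.prodMk continuous_id)
  have cψ : ∀ x, Continuous fun s => ψ x s :=
    fun x => hsol.2.1.comp (continuous_const.prodMk continuous_id)
  have cφm : ∀ x, Continuous fun s => φm x s :=
    fun x => hlow.1.comp (continuous_const.prodMk continuous_id)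
  have cψm : ∀ x, Continuous fun s => ψm x s :=
    fun x => hlow.2.1.comp (continuous_const.prodMk continuous_id)
  have cφp : ∀ x, Continuous fun s => φp x s :=
    fun x => hup.1.comp (continuous_const.prodMk continuous_id)
  have cψp : ∀ x, Continuous fun s => ψp x s :=
    fun x => hup.2.1.comp (continuous_const.prodMk continuous_id)
  have cxφ : ∀ s, Continuous fun z => φ z s :=
    fun s => hsol.1.comp (continuous_id.prodMk continuous_const)
  have cxψ : ∀ s, Continuous fun z => ψ z s :=
    fun s => hsol.2.1.comp (continuous_id.prodMk continuous_const)
  have cxφm : ∀ s, Continuous fun z => φm z s :=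
    fun s => hlow.1.comp (continuous_id.prodMk continuous_const)
  have cxψm : ∀ s, Continuous fun z => ψm z s :=
    fun s => hlow.2.1.comp (continuous_id.prodMk continuous_const)
  have cxφp : ∀ s, Continuous fun z => φp z s :=
    fun s => hup.1.comp (continuous_id.prodMk continuous_const)
  have cxψp : ∀ s, Continuous fun z => ψp z s :=
    fun s => hup.2.1.comp (continuous_id.prodMk continuous_const)
  have hsolEq := hsol.2.2
  have hlowIneq := hlow.2.2
  have hupIneq := hup.2.2
  -- main comparison on [0, t0]
  have main : ∀ t0 : ℝ, 0 < t0 → ∀ x : ℝ, ∀ t ∈ Icc (0:ℝ) t0,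
      0 ≤ φ x t - φm x t ∧ 0 ≤ φp x t - φ x t ∧
      0 ≤ ψ x t - ψm x t ∧ 0 ≤ ψp x t - ψ x t := by
    intro t0 ht0
    -- bounds for coefficients on [0, t0]
    obtain ⟨C1, hC1⟩ := (isCompact_Icc (a := (0:ℝ)) (b := t0)).exists_bound_of_continuousOn
      hd1.1.continuousOn
    obtain ⟨C2, hC2⟩ := (isCompact_Icc (a := (0:ℝ)) (b := t0)).exists_bound_of_continuousOn
      hd2.1.continuousOn
    obtain ⟨C3, hC3⟩ := (isCompact_Icc (a := (0:ℝ)) (b := t0)).exists_bound_of_continuousOn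
      ha1.1.continuousOn
    obtain ⟨C4, hC4⟩ := (isCompact_Icc (a := (0:ℝ)) (b := t0)).exists_bound_of_continuousOn
      ha2.1.continuousOn
    obtain ⟨C5, hC5⟩ := (isCompact_Icc (a := (0:ℝ)) (b := t0)).exists_bound_of_continuousOn
      hb1.1.continuousOn
    obtain ⟨C6, hC6⟩ := (isCompact_Icc (a := (0:ℝ)) (b := t0)).exists_bound_of_continuousOn
      hb2.1.continuousOn
    obtain ⟨C7, hC7⟩ := (isCompact_Icc (a := (0:ℝ)) (b := t0)).exists_bound_of_continuousOn
      hpgc.continuousOn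
    obtain ⟨C8, hC8⟩ := (isCompact_Icc (a := (0:ℝ)) (b := t0)).exists_bound_of_continuousOn
      hqgc.continuousOn
    obtain ⟨R, hRdef⟩ : ∃ XX : ℝ, XX = 1 + (|C1| + |C2| + |C3| + |C4| + |C5| + |C6| + |C7| + |C8|) := ⟨_, rfl⟩
    have hsum : (0:ℝ) ≤ |C1| + |C2| + |C3| + |C4| + |C5| + |C6| + |C7| + |C8| := by positivity
    have hR1 : 1 ≤ R := by simp only [hRdef]; linarith
    have habs : ∀ (f : ℝ → ℝ) (C : ℝ), (∀ s ∈ Icc (0:ℝ) t0, ‖f s‖ ≤ C) →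
        (C ≤ R) → ∀ s ∈ Icc (0:ℝ) t0, |f s| ≤ R := by
      intro f C hC hCR s hs
      have h := hC s hs; rw [Real.norm_eq_abs] at h; linarith
    have hd1R : ∀ s ∈ Icc (0:ℝ) t0, |d1 s| ≤ R := habs d1 C1 hC1
      (by simp only [hRdef]; nlinarith [le_abs_self C1, abs_nonneg C1, abs_nonneg C2,
        abs_nonneg C3, abs_nonneg C4, abs_nonneg C5, abs_nonneg C6, abs_nonneg C7, abs_nonneg C8])
    have hd2R : ∀ s ∈ Icc (0:ℝ) t0, |d2 s| ≤ R := habs d2 C2 hC2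
      (by simp only [hRdef]; nlinarith [le_abs_self C2, abs_nonneg C1, abs_nonneg C2,
        abs_nonneg C3, abs_nonneg C4, abs_nonneg C5, abs_nonneg C6, abs_nonneg C7, abs_nonneg C8])
    have ha1R : ∀ s ∈ Icc (0:ℝ) t0, |a1 s| ≤ R := habs a1 C3 hC3
      (by simp only [hRdef]; nlinarith [le_abs_self C3, abs_nonneg C1, abs_nonneg C2,
        abs_nonneg C3, abs_nonneg C4, abs_nonneg C5, abs_nonneg C6, abs_nonneg C7, abs_nonneg C8])
    have ha2R : ∀ s ∈ Icc (0:ℝ) t0, |a2 s| ≤ R := habs a2 C4 hC4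
      (by simp only [hRdef]; nlinarith [le_abs_self C4, abs_nonneg C1, abs_nonneg C2,
        abs_nonneg C3, abs_nonneg C4, abs_nonneg C5, abs_nonneg C6, abs_nonneg C7, abs_nonneg C8])
    have hb1R : ∀ s ∈ Icc (0:ℝ) t0, |b1 s| ≤ R := habs b1 C5 hC5
      (by simp only [hRdef]; nlinarith [le_abs_self C5, abs_nonneg C1, abs_nonneg C2,
        abs_nonneg C3, abs_nonneg C4, abs_nonneg C5, abs_nonneg C6, abs_nonneg C7, abs_nonneg C8])
    have hb2R : ∀ s ∈ Icc (0:ℝ) t0, |b2 s| ≤ R := habs b2 C6 hC6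
      (by simp only [hRdef]; nlinarith [le_abs_self C6, abs_nonneg C1, abs_nonneg C2,
        abs_nonneg C3, abs_nonneg C4, abs_nonneg C5, abs_nonneg C6, abs_nonneg C7, abs_nonneg C8])
    have hpgR : ∀ s ∈ Icc (0:ℝ) t0, |pglob r1 a1 T s| ≤ R := habs _ C7 hC7
      (by simp only [hRdef]; nlinarith [le_abs_self C7, abs_nonneg C1, abs_nonneg C2,
        abs_nonneg C3, abs_nonneg C4, abs_nonneg C5, abs_nonneg C6, abs_nonneg C7, abs_nonneg C8])
    have hqgR : ∀ s ∈ Icc (0:ℝ) t0, |pglob r2 b2 T s| ≤ R := habs _ C8 hC8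
      (by simp only [hRdef]; nlinarith [le_abs_self C8, abs_nonneg C1, abs_nonneg C2,
        abs_nonneg C3, abs_nonneg C4, abs_nonneg C5, abs_nonneg C6, abs_nonneg C7, abs_nonneg C8])
    have hpfR : ∀ s ∈ Icc (0:ℝ) t0, pfun r1 a1 T s ≤ R := by
      intro s hs
      have h := hpgR s hs
      rw [pglob_eq r1 a1 T hs.1, abs_le] at h
      exact h.2
    have hqfR : ∀ s ∈ Icc (0:ℝ) t0, pfun r2 b2 T s ≤ R := by
      intro s hs
      have h := hqgR s hs
      rw [pglob_eq r2 b2 T hs.1, abs_le] at h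
      exact h.2
    obtain ⟨B1, hB1def⟩ : ∃ XX : ℝ, XX = M0 + 2 := ⟨_, rfl⟩
    obtain ⟨B0, hB0def⟩ : ∃ XX : ℝ, XX = M0 + 1 := ⟨_, rfl⟩
    have hB10 : (0:ℝ) ≤ B1 := by simp only [hB1def]; linarith
    have hB00 : (0:ℝ) ≤ B0 := by simp only [hB0def]; linarith
    obtain ⟨L, hLdef⟩ : ∃ XX : ℝ, XX = R + 2*(R*R*B1) := ⟨_, rfl⟩
    obtain ⟨K, hKdef⟩ : ∃ XX : ℝ, XX = R + R*R*B1 := ⟨_, rfl⟩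
    have hK0 : 0 ≤ K := by simp only [hKdef]; nlinarith
    obtain ⟨C0, hC0def⟩ : ∃ XX : ℝ, XX = Real.exp (2*L*t0) * K := ⟨_, rfl⟩
    have hC00 : 0 ≤ C0 := by rw [hC0def]; exact mul_nonneg (Real.exp_pos _).le hK0
    -- the inductive bound
    have key : ∀ n : ℕ, ∀ x : ℝ, ∀ t ∈ Icc (0:ℝ) t0,
        -(B0 * ((C0 * t)^n / n.factorial)) ≤ φ x t - φm x t ∧
        -(B0 * ((C0 * t)^n / n.factorial)) ≤ φp x t - φ x t ∧
        -(B0 * ((C0 * t)^n / n.factorial)) ≤ ψ x t - ψm x t ∧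
        -(B0 * ((C0 * t)^n / n.factorial)) ≤ ψp x t - ψ x t := by
      intro n
      induction n with
      | zero =>
        intro x t ht
        have h1 := hφle x t
        have h2 := hψle x t
        have h3 := hm01 x t
        have h4 := hp01 x t
        simp only [pow_zero, Nat.factorial_zero, Nat.cast_one, div_one, mul_one]
        exact ⟨by linarith [h3.1.1, h3.1.2, hB0def], by linarith [h4.1.1, h4.1.2, hB0def],
          by linarith [h3.2.1, h3.2.2, hB0def], by linarith [h4.2.1, h4.2.2, hB0def]⟩
      | succ n ih =>
        intro x t ht
        obtain ⟨Gc, hGcdef⟩ : ∃ XX : ℝ → ℝ, XX = fun s => B0 * ((C0 * max s 0)^n / n.factorial) := ⟨_, rfl⟩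
        have hGcc : Continuous Gc := by
          rw [hGcdef]
          exact continuous_const.mul
            (((continuous_const.mul (continuous_id.max continuous_const)).pow n).div_const _)
        have hGc0 : ∀ s, 0 ≤ Gc s := by
          simp only [hGcdef]
          exact fun s => mul_nonneg hB00
            (div_nonneg (pow_nonneg (mul_nonneg hC00 (le_max_right s 0)) n) (Nat.cast_nonneg _))
        have hH : ∀ y : ℝ, ∀ τ ∈ Icc (0:ℝ) t0,
            -(Gc τ) ≤ φ y τ - φm y τ ∧ -(Gc τ) ≤ φp y τ - φ y τ ∧
            -(Gc τ) ≤ ψ y τ - ψm y τ ∧ -(Gc τ) ≤ ψp y τ - ψ y τ := by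
          intro y τ hτ
          have h := ih y τ hτ
          simp only [hGcdef]
          rw [max_eq_left hτ.1]
          exact h
        have hgKc : Continuous fun s => K * Gc s := continuous_const.mul hGcc
        have hgK0 : ∀ s, 0 ≤ K * Gc s := fun s => mul_nonneg hK0 (hGc0 s)
        -- the integral identity
        have hIeq : Real.exp (2*L*t0) * ∫ s in (0:ℝ)..t, K * Gc s
            = B0 * ((C0 * t)^(n+1) / (n+1).factorial) := by
          have e1 : EqOn (fun s => K * Gc s)
              (fun s => (K * B0 * C0^n / n.factorial) * s^n) (uIcc (0:ℝ) t) := by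
            intro s hs
            rw [uIcc_of_le ht.1] at hs
            simp only [hGcdef]
            rw [max_eq_left hs.1, mul_pow]
            ring
          rw [intervalIntegral.integral_congr e1, intervalIntegral.integral_const_mul,
            integral_pow]
          have hfact : (((n+1).factorial : ℕ) : ℝ) = ((n:ℝ)+1) * (n.factorial:ℝ) := by
            rw [Nat.factorial_succ]; push_cast; ring
          have hne1 : ((n.factorial : ℕ):ℝ) ≠ 0 := Nat.cast_ne_zero.mpr n.factorial_ne_zero
          have hne2 : ((n:ℝ)+1) ≠ 0 := by positivity
          rw [hC0def, hfact]
          have hzp : (0:ℝ)^(n+1) = 0 := by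
            exact zero_pow (Nat.succ_ne_zero n)
          rw [hzp]
          field_simp
          ring
        -- ======== component 1 : φ - φm ========
        have hres1 : -(B0 * ((C0 * t)^(n+1) / (n+1).factorial)) ≤ φ x t - φm x t := by
          obtain ⟨A1, hA1def⟩ : ∃ XX : ℝ → ℝ, XX = fun s => a1 s * pglob r1 a1 T s * (1 - φ x s - φm x s)
            - b1 s * pglob r2 b2 T s * (1 - ψm x s) - d1 s := ⟨_, rfl⟩
          have hA1c : Continuous A1 := by
            rw [hA1def]
            exact
              (((ha1.1.mul hpgc).mul ((continuous_const.sub (cφ x)).sub (cφm x))).sub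
                ((hb1.1.mul hqgc).mul (continuous_const.sub (cψm x)))).sub hd1.1
          have hA1b : ∀ s ∈ Icc (0:ℝ) t0, |A1 s| ≤ L := by
            intro s hs
            have h1 : |a1 s * pglob r1 a1 T s * (1 - φ x s - φm x s)| ≤ R*R*B1 :=
              abs3 (ha1R s hs) (hpgR s hs) (by
                rw [abs_le]
                constructor <;> linarith [(hφle x s).1, (hφle x s).2, (hm01 x s).1.1,
                  (hm01 x s).1.2, hB1def])
            have h2 : |b1 s * pglob r2 b2 T s * (1 - ψm x s)| ≤ R*R*B1 :=
              abs3 (hb1R s hs) (hqgR s hs) (by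
                rw [abs_le]
                constructor <;> linarith [(hm01 x s).2.1, (hm01 x s).2.2, hB1def, hM0nn])
            have h3 := hd1R s hs
            rw [abs_le] at h1 h2 h3 ⊢
            simp only [hA1def]
            constructor <;> [linarith [hLdef, h1.1, h1.2, h2.1, h2.2, h3.1, h3.2];
              linarith [hLdef, h1.1, h1.2, h2.1, h2.2, h3.1, h3.2]]
          have hw10 : 0 ≤ (fun s => φ x s - φm x s) 0 := by
            have ha := (hinitdata x).1
            have hb := (hinit x).1
            simp only []
            linarith
          have hder1 : ∀ s ∈ Ioo (0:ℝ) t0, ∃ w', HasDerivAt (fun τ => φ x τ - φm x τ) w' s ∧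
              A1 s * ((fun τ => φ x τ - φm x τ) s) - (K * Gc s) ≤ w' := by
            intro s hs
            have hs0 : (0:ℝ) ≤ s := hs.1.le
            have hsm : s ∈ Icc (0:ℝ) t0 := ⟨hs0, hs.2.le⟩
            obtain ⟨φmt, ψmt, hdm, hdn, him0, hin0⟩ := hlowIneq x s hs.1
            obtain ⟨hdφ, hdψ⟩ := hsolEq x s hs.1
            have him : φmt ≤ d1 s * ((∫ y, J1 y * φm (x - y) s) - φm x s)
                + φm x s * (a1 s * pfun r1 a1 T s * (1 - φm x s)
                  - b1 s * pfun r2 b2 T s * (1 - ψm x s)) := him0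
            have hd : HasDerivAt (fun τ => φ x τ - φm x τ)
                ((d1 s * ((∫ y, J1 y * φ (x - y) s) - φ x s)
                + φ x s * (a1 s * pfun r1 a1 T s * (1 - φ x s)
                  - b1 s * pfun r2 b2 T s * (1 - ψ x s))) - φmt) s := hdφ.sub hdm
            refine ⟨_, hd, ?_⟩
            have hconv : -(Gc s) ≤ (∫ y, J1 y * φ (x - y) s) - ∫ y, J1 y * φm (x - y) s :=
              conv_diff_lb hJ1int hJ1.2.1 hJ1.2.2.1 (cxφ s) (cxφm s) (B := B1)
                (fun z => by rw [abs_le]; constructor <;>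
                  linarith [(hφle z s).1, (hφle z s).2, hB1def])
                (fun z => by rw [abs_le]; constructor <;>
                  linarith [(hm01 z s).1.1, (hm01 z s).1.2, hB1def, hM0nn])
                (hGc0 s) (fun z => (hH z s hsm).1) x
            have hdconv : -(R * Gc s) ≤ d1 s * ((∫ y, J1 y * φ (x - y) s)
                - ∫ y, J1 y * φm (x - y) s) :=
              mul_lb (hd1.2.1 s).le (by have := hd1R s hsm; rw [abs_le] at this; exact this.2)
                hconv (hGc0 s)
            have hin1 : -(B1 * Gc s) ≤ φ x s * (ψ x s - ψm x s) :=
              prod_lb (by linarith [(hm01 x s).1.1, (hH x s hsm).1])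
                ((hH x s hsm).2.2.1)
                (by linarith [(hφle x s).2, hB1def])
                (by linarith [(hψle x s).2, (hm01 x s).2.1, hB1def])
                (hGc0 s) hB10
            have hcross : -(R*R*(B1 * Gc s))
                ≤ b1 s * pfun r2 b2 T s * (φ x s * (ψ x s - ψm x s)) :=
              mul_lb (mul_nonneg (hb1.2.1 s).le (hqnn s hs0))
                (mul_le_mul (by have := hb1R s hsm; rw [abs_le] at this; exact this.2)
                  (hqfR s hsm) (hqnn s hs0) (by linarith))
                hin1 (mul_nonneg hB10 (hGc0 s))
            have hiden : (d1 s * ((∫ y, J1 y * φ (x - y) s) - φ x s)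
                + φ x s * (a1 s * pfun r1 a1 T s * (1 - φ x s)
                  - b1 s * pfun r2 b2 T s * (1 - ψ x s)))
                - (d1 s * ((∫ y, J1 y * φm (x - y) s) - φm x s)
                + φm x s * (a1 s * pfun r1 a1 T s * (1 - φm x s)
                  - b1 s * pfun r2 b2 T s * (1 - ψm x s)))
                = d1 s * ((∫ y, J1 y * φ (x - y) s) - ∫ y, J1 y * φm (x - y) s)
                + A1 s * (φ x s - φm x s)
                + b1 s * pfun r2 b2 T s * (φ x s * (ψ x s - ψm x s)) := by
              simp only [hA1def]
              rw [pglob_eq r1 a1 T hs0, pglob_eq r2 b2 T hs0]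
              ring
            have hKexp : K * Gc s = R * Gc s + R*R*(B1 * Gc s) := by
              simp only [hKdef]; ring
            simp only []
            linarith [him, hdconv, hcross, hiden, hKexp]
          have res := ode_lb ht0 (A := A1) (w := fun s => φ x s - φm x s)
            (g := fun s => K * Gc s) hA1c hA1b ((cφ x).sub (cφm x)) hw10 hgKc hgK0 hder1 t ht
          linarith [hIeq, res]
        -- ======== component 2 : φp - φ ========
        have hres2 : -(B0 * ((C0 * t)^(n+1) / (n+1).factorial)) ≤ φp x t - φ x t := by
          obtain ⟨A2, hA2def⟩ : ∃ XX : ℝ → ℝ, XX = fun s => a1 s * pglob r1 a1 T s * (1 - φp x s - φ x s)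
            - b1 s * pglob r2 b2 T s * (1 - ψ x s) - d1 s := ⟨_, rfl⟩
          have hA2c : Continuous A2 := by
            rw [hA2def]
            exact
              (((ha1.1.mul hpgc).mul ((continuous_const.sub (cφp x)).sub (cφ x))).sub
                ((hb1.1.mul hqgc).mul (continuous_const.sub (cψ x)))).sub hd1.1
          have hA2b : ∀ s ∈ Icc (0:ℝ) t0, |A2 s| ≤ L := by
            intro s hs
            have h1 : |a1 s * pglob r1 a1 T s * (1 - φp x s - φ x s)| ≤ R*R*B1 :=
              abs3 (ha1R s hs) (hpgR s hs) (by
                rw [abs_le]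
                constructor <;> linarith [(hφle x s).1, (hφle x s).2, (hp01 x s).1.1,
                  (hp01 x s).1.2, hB1def])
            have h2 : |b1 s * pglob r2 b2 T s * (1 - ψ x s)| ≤ R*R*B1 :=
              abs3 (hb1R s hs) (hqgR s hs) (by
                rw [abs_le]
                constructor <;> linarith [(hψle x s).1, (hψle x s).2, hB1def])
            have h3 := hd1R s hs
            rw [abs_le] at h1 h2 h3 ⊢
            simp only [hA2def]
            constructor <;> [linarith [hLdef, h1.1, h1.2, h2.1, h2.2, h3.1, h3.2];
              linarith [hLdef, h1.1, h1.2, h2.1, h2.2, h3.1, h3.2]]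
          have hw20 : 0 ≤ (fun s => φp x s - φ x s) 0 := by
            have ha := (hinitdata x).1
            have hb := (hinit x).2.1
            simp only []
            linarith
          have hder2 : ∀ s ∈ Ioo (0:ℝ) t0, ∃ w', HasDerivAt (fun τ => φp x τ - φ x τ) w' s ∧
              A2 s * ((fun τ => φp x τ - φ x τ) s) - (K * Gc s) ≤ w' := by
            intro s hs
            have hs0 : (0:ℝ) ≤ s := hs.1.le
            have hsm : s ∈ Icc (0:ℝ) t0 := ⟨hs0, hs.2.le⟩
            obtain ⟨φpt, ψpt, hdp, hdq, hip0, hiq0⟩ := hupIneq x s hs.1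
            obtain ⟨hdφ, hdψ⟩ := hsolEq x s hs.1
            have hip : d1 s * ((∫ y, J1 y * φp (x - y) s) - φp x s)
                + φp x s * (a1 s * pfun r1 a1 T s * (1 - φp x s)
                  - b1 s * pfun r2 b2 T s * (1 - ψp x s)) ≤ φpt := hip0
            have hd : HasDerivAt (fun τ => φp x τ - φ x τ)
                (φpt - (d1 s * ((∫ y, J1 y * φ (x - y) s) - φ x s)
                + φ x s * (a1 s * pfun r1 a1 T s * (1 - φ x s)
                  - b1 s * pfun r2 b2 T s * (1 - ψ x s)))) s := hdp.sub hdφ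
            refine ⟨_, hd, ?_⟩
            have hconv : -(Gc s) ≤ (∫ y, J1 y * φp (x - y) s) - ∫ y, J1 y * φ (x - y) s :=
              conv_diff_lb hJ1int hJ1.2.1 hJ1.2.2.1 (cxφp s) (cxφ s) (B := B1)
                (fun z => by rw [abs_le]; constructor <;>
                  linarith [(hp01 z s).1.1, (hp01 z s).1.2, hB1def, hM0nn])
                (fun z => by rw [abs_le]; constructor <;>
                  linarith [(hφle z s).1, (hφle z s).2, hB1def])
                (hGc0 s) (fun z => (hH z s hsm).2.1) x
            have hdconv : -(R * Gc s) ≤ d1 s * ((∫ y, J1 y * φp (x - y) s)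
                - ∫ y, J1 y * φ (x - y) s) :=
              mul_lb (hd1.2.1 s).le (by have := hd1R s hsm; rw [abs_le] at this; exact this.2)
                hconv (hGc0 s)
            have hin1 : -(B1 * Gc s) ≤ φp x s * (ψp x s - ψ x s) :=
              prod_lb (by linarith [(hp01 x s).1.1, hGc0 s])
                ((hH x s hsm).2.2.2)
                (by linarith [(hp01 x s).1.2, hB1def, hM0nn])
                (by linarith [(hp01 x s).2.2, (hψle x s).1, hB1def])
                (hGc0 s) hB10
            have hcross : -(R*R*(B1 * Gc s))
                ≤ b1 s * pfun r2 b2 T s * (φp x s * (ψp x s - ψ x s)) :=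
              mul_lb (mul_nonneg (hb1.2.1 s).le (hqnn s hs0))
                (mul_le_mul (by have := hb1R s hsm; rw [abs_le] at this; exact this.2)
                  (hqfR s hsm) (hqnn s hs0) (by linarith))
                hin1 (mul_nonneg hB10 (hGc0 s))
            have hiden : (d1 s * ((∫ y, J1 y * φp (x - y) s) - φp x s)
                + φp x s * (a1 s * pfun r1 a1 T s * (1 - φp x s)
                  - b1 s * pfun r2 b2 T s * (1 - ψp x s)))
                - (d1 s * ((∫ y, J1 y * φ (x - y) s) - φ x s)
                + φ x s * (a1 s * pfun r1 a1 T s * (1 - φ x s)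
                  - b1 s * pfun r2 b2 T s * (1 - ψ x s)))
                = d1 s * ((∫ y, J1 y * φp (x - y) s) - ∫ y, J1 y * φ (x - y) s)
                + A2 s * (φp x s - φ x s)
                + b1 s * pfun r2 b2 T s * (φp x s * (ψp x s - ψ x s)) := by
              simp only [hA2def]
              rw [pglob_eq r1 a1 T hs0, pglob_eq r2 b2 T hs0]
              ring
            have hKexp : K * Gc s = R * Gc s + R*R*(B1 * Gc s) := by
              simp only [hKdef]; ring
            simp only []
            linarith [hip, hdconv, hcross, hiden, hKexp]
          have res := ode_lb ht0 (A := A2) (w := fun s => φp x s - φ x s)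
            (g := fun s => K * Gc s) hA2c hA2b ((cφp x).sub (cφ x)) hw20 hgKc hgK0 hder2 t ht
          linarith [hIeq, res]
        -- ======== component 3 : ψ - ψm ========
        have hres3 : -(B0 * ((C0 * t)^(n+1) / (n+1).factorial)) ≤ ψ x t - ψm x t := by
          obtain ⟨A3, hA3def⟩ : ∃ XX : ℝ → ℝ, XX = fun s => -(a2 s * pglob r1 a1 T s * φ x s)
            - b2 s * pglob r2 b2 T s * (1 - ψ x s - ψm x s) - d2 s := ⟨_, rfl⟩
          have hA3c : Continuous A3 := by
            rw [hA3def]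
            exact
              ((((ha2.1.mul hpgc).mul (cφ x)).neg).sub
                ((hb2.1.mul hqgc).mul ((continuous_const.sub (cψ x)).sub (cψm x)))).sub hd2.1
          have hA3b : ∀ s ∈ Icc (0:ℝ) t0, |A3 s| ≤ L := by
            intro s hs
            have h1 : |a2 s * pglob r1 a1 T s * φ x s| ≤ R*R*B1 :=
              abs3 (ha2R s hs) (hpgR s hs) (by
                rw [abs_le]
                constructor <;> linarith [(hφle x s).1, (hφle x s).2, hB1def])
            have h2 : |b2 s * pglob r2 b2 T s * (1 - ψ x s - ψm x s)| ≤ R*R*B1 :=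
              abs3 (hb2R s hs) (hqgR s hs) (by
                rw [abs_le]
                constructor <;> linarith [(hψle x s).1, (hψle x s).2, (hm01 x s).2.1,
                  (hm01 x s).2.2, hB1def])
            have h3 := hd2R s hs
            rw [abs_le] at h1 h2 h3 ⊢
            simp only [hA3def]
            constructor <;> [linarith [hLdef, h1.1, h1.2, h2.1, h2.2, h3.1, h3.2];
              linarith [hLdef, h1.1, h1.2, h2.1, h2.2, h3.1, h3.2]]
          have hw30 : 0 ≤ (fun s => ψ x s - ψm x s) 0 := by
            have ha := (hinitdata x).2
            have hb := (hinit x).2.2.1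
            simp only []
            linarith
          have hder3 : ∀ s ∈ Ioo (0:ℝ) t0, ∃ w', HasDerivAt (fun τ => ψ x τ - ψm x τ) w' s ∧
              A3 s * ((fun τ => ψ x τ - ψm x τ) s) - (K * Gc s) ≤ w' := by
            intro s hs
            have hs0 : (0:ℝ) ≤ s := hs.1.le
            have hsm : s ∈ Icc (0:ℝ) t0 := ⟨hs0, hs.2.le⟩
            obtain ⟨φmt, ψmt, hdm, hdn, him0, hin0⟩ := hlowIneq x s hs.1
            obtain ⟨hdφ, hdψ⟩ := hsolEq x s hs.1
            have hin : ψmt ≤ d2 s * ((∫ y, J2 y * ψm (x - y) s) - ψm x s)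
                + (1 - ψm x s) * (a2 s * pfun r1 a1 T s * φm x s
                  - b2 s * pfun r2 b2 T s * ψm x s) := hin0
            have hd : HasDerivAt (fun τ => ψ x τ - ψm x τ)
                ((d2 s * ((∫ y, J2 y * ψ (x - y) s) - ψ x s)
                + (1 - ψ x s) * (a2 s * pfun r1 a1 T s * φ x s
                  - b2 s * pfun r2 b2 T s * ψ x s)) - ψmt) s := hdψ.sub hdn
            refine ⟨_, hd, ?_⟩
            have hconv : -(Gc s) ≤ (∫ y, J2 y * ψ (x - y) s) - ∫ y, J2 y * ψm (x - y) s :=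
              conv_diff_lb hJ2int hJ2.2.1 hJ2.2.2.1 (cxψ s) (cxψm s) (B := B1)
                (fun z => by rw [abs_le]; constructor <;>
                  linarith [(hψle z s).1, (hψle z s).2, hB1def])
                (fun z => by rw [abs_le]; constructor <;>
                  linarith [(hm01 z s).2.1, (hm01 z s).2.2, hB1def, hM0nn])
                (hGc0 s) (fun z => (hH z s hsm).2.2.1) x
            have hdconv : -(R * Gc s) ≤ d2 s * ((∫ y, J2 y * ψ (x - y) s)
                - ∫ y, J2 y * ψm (x - y) s) :=
              mul_lb (hd2.2.1 s).le (by have := hd2R s hsm; rw [abs_le] at this; exact this.2)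
                hconv (hGc0 s)
            have hin1 : -(B1 * Gc s) ≤ (1 - ψm x s) * (φ x s - φm x s) :=
              prod_lb (by linarith [(hm01 x s).2.2, hGc0 s])
                ((hH x s hsm).1)
                (by linarith [(hm01 x s).2.1, hB1def, hM0nn])
                (by linarith [(hφle x s).2, (hm01 x s).1.1, hB1def])
                (hGc0 s) hB10
            have hcross : -(R*R*(B1 * Gc s))
                ≤ a2 s * pfun r1 a1 T s * ((1 - ψm x s) * (φ x s - φm x s)) :=
              mul_lb (mul_nonneg (ha2.2.1 s).le (hpnn s hs0))
                (mul_le_mul (by have := ha2R s hsm; rw [abs_le] at this; exact this.2)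
                  (hpfR s hsm) (hpnn s hs0) (by linarith))
                hin1 (mul_nonneg hB10 (hGc0 s))
            have hiden : (d2 s * ((∫ y, J2 y * ψ (x - y) s) - ψ x s)
                + (1 - ψ x s) * (a2 s * pfun r1 a1 T s * φ x s
                  - b2 s * pfun r2 b2 T s * ψ x s))
                - (d2 s * ((∫ y, J2 y * ψm (x - y) s) - ψm x s)
                + (1 - ψm x s) * (a2 s * pfun r1 a1 T s * φm x s
                  - b2 s * pfun r2 b2 T s * ψm x s))
                = d2 s * ((∫ y, J2 y * ψ (x - y) s) - ∫ y, J2 y * ψm (x - y) s)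
                + A3 s * (ψ x s - ψm x s)
                + a2 s * pfun r1 a1 T s * ((1 - ψm x s) * (φ x s - φm x s)) := by
              simp only [hA3def]
              rw [pglob_eq r1 a1 T hs0, pglob_eq r2 b2 T hs0]
              ring
            have hKexp : K * Gc s = R * Gc s + R*R*(B1 * Gc s) := by
              simp only [hKdef]; ring
            simp only []
            linarith [hin, hdconv, hcross, hiden, hKexp]
          have res := ode_lb ht0 (A := A3) (w := fun s => ψ x s - ψm x s)
            (g := fun s => K * Gc s) hA3c hA3b ((cψ x).sub (cψm x)) hw30 hgKc hgK0 hder3 t ht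
          linarith [hIeq, res]
        -- ======== component 4 : ψp - ψ ========
        have hres4 : -(B0 * ((C0 * t)^(n+1) / (n+1).factorial)) ≤ ψp x t - ψ x t := by
          obtain ⟨A4, hA4def⟩ : ∃ XX : ℝ → ℝ, XX = fun s => -(a2 s * pglob r1 a1 T s * φp x s)
            - b2 s * pglob r2 b2 T s * (1 - ψp x s - ψ x s) - d2 s := ⟨_, rfl⟩
          have hA4c : Continuous A4 := by
            rw [hA4def]
            exact
              ((((ha2.1.mul hpgc).mul (cφp x)).neg).sub
                ((hb2.1.mul hqgc).mul ((continuous_const.sub (cψp x)).sub (cψ x)))).sub hd2.1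
          have hA4b : ∀ s ∈ Icc (0:ℝ) t0, |A4 s| ≤ L := by
            intro s hs
            have h1 : |a2 s * pglob r1 a1 T s * φp x s| ≤ R*R*B1 :=
              abs3 (ha2R s hs) (hpgR s hs) (by
                rw [abs_le]
                constructor <;> linarith [(hp01 x s).1.1, (hp01 x s).1.2, hB1def, hM0nn])
            have h2 : |b2 s * pglob r2 b2 T s * (1 - ψp x s - ψ x s)| ≤ R*R*B1 :=
              abs3 (hb2R s hs) (hqgR s hs) (by
                rw [abs_le]
                constructor <;> linarith [(hψle x s).1, (hψle x s).2, (hp01 x s).2.1,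
                  (hp01 x s).2.2, hB1def])
            have h3 := hd2R s hs
            rw [abs_le] at h1 h2 h3 ⊢
            simp only [hA4def]
            constructor <;> [linarith [hLdef, h1.1, h1.2, h2.1, h2.2, h3.1, h3.2];
              linarith [hLdef, h1.1, h1.2, h2.1, h2.2, h3.1, h3.2]]
          have hw40 : 0 ≤ (fun s => ψp x s - ψ x s) 0 := by
            have ha := (hinitdata x).2
            have hb := (hinit x).2.2.2
            simp only []
            linarith
          have hder4 : ∀ s ∈ Ioo (0:ℝ) t0, ∃ w', HasDerivAt (fun τ => ψp x τ - ψ x τ) w' s ∧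
              A4 s * ((fun τ => ψp x τ - ψ x τ) s) - (K * Gc s) ≤ w' := by
            intro s hs
            have hs0 : (0:ℝ) ≤ s := hs.1.le
            have hsm : s ∈ Icc (0:ℝ) t0 := ⟨hs0, hs.2.le⟩
            obtain ⟨φpt, ψpt, hdp, hdq, hip0, hiq0⟩ := hupIneq x s hs.1
            obtain ⟨hdφ, hdψ⟩ := hsolEq x s hs.1
            have hiq : d2 s * ((∫ y, J2 y * ψp (x - y) s) - ψp x s)
                + (1 - ψp x s) * (a2 s * pfun r1 a1 T s * φp x s
                  - b2 s * pfun r2 b2 T s * ψp x s) ≤ ψpt := hiq0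
            have hd : HasDerivAt (fun τ => ψp x τ - ψ x τ)
                (ψpt - (d2 s * ((∫ y, J2 y * ψ (x - y) s) - ψ x s)
                + (1 - ψ x s) * (a2 s * pfun r1 a1 T s * φ x s
                  - b2 s * pfun r2 b2 T s * ψ x s))) s := hdq.sub hdψ
            refine ⟨_, hd, ?_⟩
            have hconv : -(Gc s) ≤ (∫ y, J2 y * ψp (x - y) s) - ∫ y, J2 y * ψ (x - y) s :=
              conv_diff_lb hJ2int hJ2.2.1 hJ2.2.2.1 (cxψp s) (cxψ s) (B := B1)
                (fun z => by rw [abs_le]; constructor <;>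
                  linarith [(hp01 z s).2.1, (hp01 z s).2.2, hB1def, hM0nn])
                (fun z => by rw [abs_le]; constructor <;>
                  linarith [(hψle z s).1, (hψle z s).2, hB1def])
                (hGc0 s) (fun z => (hH z s hsm).2.2.2) x
            have hdconv : -(R * Gc s) ≤ d2 s * ((∫ y, J2 y * ψp (x - y) s)
                - ∫ y, J2 y * ψ (x - y) s) :=
              mul_lb (hd2.2.1 s).le (by have := hd2R s hsm; rw [abs_le] at this; exact this.2)
                hconv (hGc0 s)
            have hin1 : -(B1 * Gc s) ≤ (1 - ψ x s) * (φp x s - φ x s) :=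
              prod_lb (by linarith [(hH x s hsm).2.2.2, (hp01 x s).2.2])
                ((hH x s hsm).2.1)
                (by linarith [(hψle x s).1, hB1def])
                (by linarith [(hp01 x s).1.2, (hφle x s).1, hB1def])
                (hGc0 s) hB10
            have hcross : -(R*R*(B1 * Gc s))
                ≤ a2 s * pfun r1 a1 T s * ((1 - ψ x s) * (φp x s - φ x s)) :=
              mul_lb (mul_nonneg (ha2.2.1 s).le (hpnn s hs0))
                (mul_le_mul (by have := ha2R s hsm; rw [abs_le] at this; exact this.2)
                  (hpfR s hsm) (hpnn s hs0) (by linarith))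
                hin1 (mul_nonneg hB10 (hGc0 s))
            have hiden : (d2 s * ((∫ y, J2 y * ψp (x - y) s) - ψp x s)
                + (1 - ψp x s) * (a2 s * pfun r1 a1 T s * φp x s
                  - b2 s * pfun r2 b2 T s * ψp x s))
                - (d2 s * ((∫ y, J2 y * ψ (x - y) s) - ψ x s)
                + (1 - ψ x s) * (a2 s * pfun r1 a1 T s * φ x s
                  - b2 s * pfun r2 b2 T s * ψ x s))
                = d2 s * ((∫ y, J2 y * ψp (x - y) s) - ∫ y, J2 y * ψ (x - y) s)
                + A4 s * (ψp x s - ψ x s)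
                + a2 s * pfun r1 a1 T s * ((1 - ψ x s) * (φp x s - φ x s)) := by
              simp only [hA4def]
              rw [pglob_eq r1 a1 T hs0, pglob_eq r2 b2 T hs0]
              ring
            have hKexp : K * Gc s = R * Gc s + R*R*(B1 * Gc s) := by
              simp only [hKdef]; ring
            simp only []
            linarith [hiq, hdconv, hcross, hiden, hKexp]
          have res := ode_lb ht0 (A := A4) (w := fun s => ψp x s - ψ x s)
            (g := fun s => K * Gc s) hA4c hA4b ((cψp x).sub (cψ x)) hw40 hgKc hgK0 hder4 t ht
          linarith [hIeq, res]
        exact ⟨hres1, hres2, hres3, hres4⟩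
    -- limit n → ∞
    intro x t ht
    have hlim : Tendsto (fun nn : ℕ => -(B0 * ((C0*t)^nn / nn.factorial))) atTop (nhds 0) := by
      have h0 := FloorSemiring.tendsto_pow_div_factorial_atTop (C0*t)
      have h1 := h0.const_mul B0
      have h2 := h1.neg
      simpa using h2
    refine ⟨?_, ?_, ?_, ?_⟩
    · exact le_of_tendsto' hlim (fun nn => (key nn x t ht).1)
    · exact le_of_tendsto' hlim (fun nn => (key nn x t ht).2.1)
    · exact le_of_tendsto' hlim (fun nn => (key nn x t ht).2.2.1)
    · exact le_of_tendsto' hlim (fun nn => (key nn x t ht).2.2.2)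
  intro x t ht
  have h := main (t+1) (by linarith) x t ⟨ht, by linarith⟩
  exact ⟨by linarith [h.1], by linarith [h.2.1], by linarith [h.2.2.1], by linarith [h.2.2.2]⟩
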